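/- arXiv:chao-dyn/9304010 — 2 statements merged into one kernel-verified Lean document; each statement's English description precedes it below -/
import Mathlib

section
/- Let P(λ) = λ⁴ + c₃λ³ + c₂λ² + c₁λ + c₀ be a monic quartic polynomial with real coefficients. Then P has a pair of pure imaginary roots and c₃ ≠ 0 if and only if c₀c₃² − c₁c₂c₃ + c₁² = 0 and c₁c₃ > 0; in that case the pure imaginary roots are ±i√(c₁/c₃). -/
open Polynomial

lemma quartic_eval_imag (c₀ c₁ c₂ c₃ ω : ℝ) :
    aeval ((ω : ℂ) * Complex.I) (X ^ 4 + C c₃ * X ^ 3 + C c₂ * X ^ 2 + C c₁ * X + C c₀) = 0 ↔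
    (ω ^ 4 - c₂ * ω ^ 2 + c₀ = 0 ∧ c₁ * ω - c₃ * ω ^ 3 = 0) := by
  have hI3 : Complex.I ^ 3 = -Complex.I := by
    rw [pow_succ, Complex.I_sq]; ring
  have hI4 : Complex.I ^ 4 = 1 := by
    rw [show (4:ℕ) = 2*2 by norm_num, pow_mul, Complex.I_sq]; norm_num
  simp only [map_add, map_mul, map_pow, aeval_X, aeval_C, Complex.coe_algebraMap]
  rw [show ((ω:ℂ)*Complex.I)^4 + (c₃:ℂ)*((ω:ℂ)*Complex.I)^3 + (c₂:ℂ)*((ω:ℂ)*Complex.I)^2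
      + (c₁:ℂ)*((ω:ℂ)*Complex.I) + (c₀:ℂ)
    = ((ω^4 - c₂*ω^2 + c₀ : ℝ) : ℂ) + ((c₁*ω - c₃*ω^3 : ℝ) : ℂ) * Complex.I by
      push_cast
      ring_nf
      rw [hI3, hI4, Complex.I_sq]
      ring]
  rw [Complex.ext_iff]
  simp [← Complex.ofReal_pow]

lemma quartic_eval_imag_neg (c₀ c₁ c₂ c₃ ω : ℝ) :
    aeval (-((ω : ℂ) * Complex.I)) (X ^ 4 + C c₃ * X ^ 3 + C c₂ * X ^ 2 + C c₁ * X + C c₀) = 0 ↔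
    (ω ^ 4 - c₂ * ω ^ 2 + c₀ = 0 ∧ c₁ * ω - c₃ * ω ^ 3 = 0) := by
  have : -((ω : ℂ) * Complex.I) = ((-ω : ℝ) : ℂ) * Complex.I := by push_cast; ring
  rw [this, quartic_eval_imag]
  constructor <;> rintro ⟨a, b⟩ <;> constructor <;> nlinarith [a, b]

lemma quartic_aux (c₀ c₁ c₂ c₃ : ℝ)
    (heq : c₀ * c₃ ^ 2 - c₁ * c₂ * c₃ + c₁ ^ 2 = 0) (hpos : 0 < c₁ * c₃) :
    (Real.sqrt (c₁ / c₃)) ^ 4 - c₂ * (Real.sqrt (c₁ / c₃)) ^ 2 + c₀ = 0 ∧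
    c₁ * Real.sqrt (c₁ / c₃) - c₃ * (Real.sqrt (c₁ / c₃)) ^ 3 = 0 := by
  have hc₃ : c₃ ≠ 0 := by rintro rfl; simp at hpos
  have hdiv : 0 < c₁ / c₃ := by
    rcases lt_or_gt_of_ne hc₃ with h | h
    · exact div_pos_of_neg_of_neg (by nlinarith) h
    · exact div_pos (by nlinarith) h
  have hsq : (Real.sqrt (c₁ / c₃)) ^ 2 = c₁ / c₃ := Real.sq_sqrt hdiv.le
  set ω := Real.sqrt (c₁ / c₃)
  constructor
  · have : ω ^ 4 = (c₁ / c₃) ^ 2 := by rw [← hsq]; ring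
    rw [this, hsq]
    field_simp
    linear_combination heq
  · have : ω ^ 3 = (c₁ / c₃) * ω := by rw [← hsq]; ring
    rw [this]
    field_simp
    ring

/-- A monic real quartic `λ⁴ + c₃λ³ + c₂λ² + c₁λ + c₀` has a pair of pure imaginary
roots with `c₃ ≠ 0` iff `c₀c₃² - c₁c₂c₃ + c₁² = 0` and `c₁c₃ > 0`; in that case the
pure imaginary roots are `±i√(c₁/c₃)`. -/
theorem quartic_pure_imaginary_roots_iff (c₀ c₁ c₂ c₃ : ℝ) :
    (((∃ ω : ℝ, ω ≠ 0 ∧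
        aeval ((ω : ℂ) * Complex.I)
          (X ^ 4 + C c₃ * X ^ 3 + C c₂ * X ^ 2 + C c₁ * X + C c₀) = 0 ∧
        aeval (-((ω : ℂ) * Complex.I))
          (X ^ 4 + C c₃ * X ^ 3 + C c₂ * X ^ 2 + C c₁ * X + C c₀) = 0) ∧ c₃ ≠ 0) ↔
      (c₀ * c₃ ^ 2 - c₁ * c₂ * c₃ + c₁ ^ 2 = 0 ∧ 0 < c₁ * c₃)) ∧
    ((c₀ * c₃ ^ 2 - c₁ * c₂ * c₃ + c₁ ^ 2 = 0 ∧ 0 < c₁ * c₃) →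
      aeval ((Real.sqrt (c₁ / c₃) : ℂ) * Complex.I)
        (X ^ 4 + C c₃ * X ^ 3 + C c₂ * X ^ 2 + C c₁ * X + C c₀ : Polynomial ℝ) = 0 ∧
      aeval (-((Real.sqrt (c₁ / c₃) : ℂ) * Complex.I))
        (X ^ 4 + C c₃ * X ^ 3 + C c₂ * X ^ 2 + C c₁ * X + C c₀ : Polynomial ℝ) = 0) := by
  have hpart2 : (c₀ * c₃ ^ 2 - c₁ * c₂ * c₃ + c₁ ^ 2 = 0 ∧ 0 < c₁ * c₃) →
      aeval ((Real.sqrt (c₁ / c₃) : ℂ) * Complex.I)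
        (X ^ 4 + C c₃ * X ^ 3 + C c₂ * X ^ 2 + C c₁ * X + C c₀ : Polynomial ℝ) = 0 ∧
      aeval (-((Real.sqrt (c₁ / c₃) : ℂ) * Complex.I))
        (X ^ 4 + C c₃ * X ^ 3 + C c₂ * X ^ 2 + C c₁ * X + C c₀ : Polynomial ℝ) = 0 := by
    rintro ⟨heq, hpos⟩
    obtain ⟨h1, h2⟩ := quartic_aux c₀ c₁ c₂ c₃ heq hpos
    exact ⟨(quartic_eval_imag _ _ _ _ _).2 ⟨h1, h2⟩, (quartic_eval_imag_neg _ _ _ _ _).2 ⟨h1, h2⟩⟩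
  refine ⟨⟨?_, ?_⟩, hpart2⟩
  · rintro ⟨⟨ω, hω, h1, -⟩, hc₃⟩
    rw [quartic_eval_imag] at h1
    obtain ⟨hre, him⟩ := h1
    have hq : c₁ = c₃ * ω ^ 2 := by
      have : ω * (c₁ - c₃ * ω ^ 2) = 0 := by linarith [him]; 
      rcases mul_eq_zero.1 this with h | h
      · exact absurd h hω
      · linarith
    constructor
    · linear_combination c₃^2 * hre + (c₁ + c₃*ω^2 - c₂*c₃) * hq
    · have : c₁ * c₃ = (c₃ * ω) ^ 2 := by rw [hq]; ring
      rw [this]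
      positivity
  · rintro ⟨heq, hpos⟩
    have hc₃ : c₃ ≠ 0 := by rintro rfl; simp at hpos
    have hdiv : 0 < c₁ / c₃ := by
      rcases lt_or_gt_of_ne hc₃ with h | h
      · exact div_pos_of_neg_of_neg (by nlinarith) h
      · exact div_pos (by nlinarith) h
    refine ⟨⟨Real.sqrt (c₁ / c₃), ?_, hpart2 ⟨heq, hpos⟩⟩, hc₃⟩
    positivity
end

section
/- Define F : ℝ² → ℝ³ by F(x,t) = (x + t, −xt − t²/2, x²t + xt² + t³/3), the surface swept out by trajectories of the vector field X = ∂_x − x ∂_y + x² ∂_z through the x-axis. Then: (i) the Jacobian matrix of F at (0,0) has rank 1 (both partial derivative vectors equal (1,0,0)), so the surface is singular there; (ii) the intersection of the image of F with the plane {first coordinate = 0} is exactly the cusp curve {(0, s²/2, −s³/3) : s ∈ ℝ}, and every point (0,y,z) of this intersection satisfies 9z² = 8y³. -/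
/-- `F(x,t) = Φ((x,0,0),t)`: the surface swept out by the trajectories of
`X = ∂ₓ - x ∂_y + x² ∂_z` through the x-axis. -/
noncomputable def cuspSurface (q : ℝ × ℝ) : ℝ × ℝ × ℝ :=
  (q.1 + q.2, -q.1 * q.2 - q.2 ^ 2 / 2, q.1 ^ 2 * q.2 + q.1 * q.2 ^ 2 + q.2 ^ 3 / 3)

/-- The derivative of `cuspSurface` at the origin. -/
noncomputable def cuspDeriv : (ℝ × ℝ) →L[ℝ] ℝ × ℝ × ℝ :=
  (ContinuousLinearMap.fst ℝ ℝ ℝ + ContinuousLinearMap.snd ℝ ℝ ℝ).prod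
    ((0 : (ℝ × ℝ) →L[ℝ] ℝ).prod 0)

lemma cusp_hfd : HasFDerivAt cuspSurface cuspDeriv (0, 0) := by
  have hx : HasFDerivAt (fun q : ℝ × ℝ => q.1) (ContinuousLinearMap.fst ℝ ℝ ℝ) ((0:ℝ), (0:ℝ)) :=
    hasFDerivAt_fst
  have ht : HasFDerivAt (fun q : ℝ × ℝ => q.2) (ContinuousLinearMap.snd ℝ ℝ ℝ) ((0:ℝ), (0:ℝ)) :=
    hasFDerivAt_snd
  have h1 := hx.add ht
  have h2 := ((hx.neg.mul ht).sub ((ht.mul ht).mul_const (2:ℝ)⁻¹))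
  have h3 := ((((hx.mul hx).mul ht).add (hx.mul (ht.mul ht))).add
    ((((ht.mul ht).mul ht)).mul_const (3:ℝ)⁻¹))
  have h := HasFDerivAt.prodMk h1 (HasFDerivAt.prodMk h2 h3)
  have he : cuspSurface = fun q : ℝ × ℝ =>
      (q.1 + q.2, -q.1 * q.2 - q.2 * q.2 * (2:ℝ)⁻¹,
        q.1 * q.1 * q.2 + q.1 * (q.2 * q.2) + q.2 * q.2 * q.2 * (3:ℝ)⁻¹) := by
    funext q
    simp only [cuspSurface, Prod.mk.injEq]
    refine ⟨trivial, by ring, by ring⟩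
  rw [he]
  refine h.congr_fderiv ?_
  refine ContinuousLinearMap.ext fun p => ?_
  simp [cuspDeriv]

lemma cusp_fderiv : fderiv ℝ cuspSurface (0, 0) = cuspDeriv := cusp_hfd.fderiv

/-- (i) The Jacobian of `F` at `(0,0)` has rank 1, with both partial derivatives equal
to `(1,0,0)`; (ii) the intersection of the image of `F` with the plane `{first
coordinate = 0}` is the cusp `{(0, s²/2, -s³/3)}`, each point of which satisfies
`9z² = 8y³`. -/
theorem cuspSurface_singular_cusp :
    (fderiv ℝ cuspSurface (0, 0) (1, 0) = (1, 0, 0) ∧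
      fderiv ℝ cuspSurface (0, 0) (0, 1) = (1, 0, 0) ∧
      LinearMap.rank (fderiv ℝ cuspSurface (0, 0) : (ℝ × ℝ) →ₗ[ℝ] ℝ × ℝ × ℝ) = 1) ∧
    ({q : ℝ × ℝ × ℝ | q ∈ Set.range cuspSurface ∧ q.1 = 0} =
      {q : ℝ × ℝ × ℝ | ∃ s : ℝ, q = (0, s ^ 2 / 2, -s ^ 3 / 3)}) ∧
    (∀ y z : ℝ, ((0 : ℝ), y, z) ∈ Set.range cuspSurface →
      9 * z ^ 2 = 8 * y ^ 3) := by
  refine ⟨⟨?_, ?_, ?_⟩, ?_, ?_⟩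
  · rw [cusp_fderiv]; simp [cuspDeriv]
  · rw [cusp_fderiv]; simp [cuspDeriv]
  · rw [cusp_fderiv]
    have hr : LinearMap.range (cuspDeriv : (ℝ × ℝ) →ₗ[ℝ] ℝ × ℝ × ℝ) =
        (ℝ ∙ (((1:ℝ), (0:ℝ), (0:ℝ)) : ℝ × ℝ × ℝ)) := by
      apply le_antisymm
      · rintro _ ⟨p, rfl⟩
        rw [Submodule.mem_span_singleton]
        exact ⟨p.1 + p.2, by simp [cuspDeriv, Prod.ext_iff]⟩
      · rw [Submodule.span_singleton_le_iff_mem]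
        exact ⟨((1:ℝ), (0:ℝ)), by simp [cuspDeriv, Prod.ext_iff]⟩
    rw [LinearMap.rank, hr,
      rank_span_set ((linearIndepOn_singleton_iff ℝ).mpr (by simp [Prod.ext_iff]))]
    simp
  · ext q
    simp only [Set.mem_setOf_eq, Set.mem_range]
    constructor
    · rintro ⟨⟨⟨x, t⟩, rfl⟩, h0⟩
      have hx : x = -t := by
        have := h0
        simp [cuspSurface] at this
        linarith
      refine ⟨-t, ?_⟩
      subst hx
      simp only [cuspSurface, Prod.mk.injEq]
      refine ⟨by ring, by ring, by ring⟩
    · rintro ⟨s, rfl⟩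
      refine ⟨⟨(s, -s), ?_⟩, rfl⟩
      simp only [cuspSurface, Prod.mk.injEq]
      refine ⟨by ring, by ring, by ring⟩
  · rintro y z ⟨⟨x, t⟩, h⟩
    simp only [cuspSurface, Prod.mk.injEq] at h
    obtain ⟨h0, hy, hz⟩ := h
    have hx : x = -t := by linarith
    subst hx
    subst hy; subst hz
    ring
end
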